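/- Let f : X → Y be a surjective continuous affine open map between compact convex sets, let B be a nonempty compact convex subset of Y, let A = f⁻¹(B), and let x be an exposed point of A. Then there exists an open neighborhood U of x in X such that f(A \ U) = B, and the closed convex hull A' of A \ U satisfies A' ≠ A and f(A') = B. -/

import Mathlib

/-- Let `f : X → Y` be a surjective continuous affine open map
between compact convex sets (with fibers of more than one point), `B ⊆ Y` a
nonempty compact convex set, `A = f⁻¹(B) ∩ X`, and `x` an exposed point of `A`.
Then there is an open neighborhood `U` of `x` with `f(A \ U) = B`, and the closed
convex hull `A'` of `A \ U` satisfies `A' ≠ A` and `f(A') = B`. -/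
theorem exposed_point_shrinking
    (E F : Type*) [AddCommGroup E] [Module ℝ E] [TopologicalSpace E]
    [IsTopologicalAddGroup E] [ContinuousSMul ℝ E] [T2Space E] [LocallyConvexSpace ℝ E]
    [AddCommGroup F] [Module ℝ F] [TopologicalSpace F]
    [IsTopologicalAddGroup F] [ContinuousSMul ℝ F] [T2Space F] [LocallyConvexSpace ℝ F]
    (X : Set E) (Y : Set F) (hX : IsCompact X) (hXv : Convex ℝ X)
    (hY : IsCompact Y) (hYv : Convex ℝ Y)
    (f : E → F) (hcont : ContinuousOn f X) (hmaps : Set.MapsTo f X Y)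
    (haff : ∀ x ∈ X, ∀ y ∈ X, ∀ t : ℝ, t ∈ Set.Icc (0:ℝ) 1 →
      f (t • x + (1 - t) • y) = t • f x + (1 - t) • f y)
    (hsurj : f '' X = Y)
    (hopen : ∀ U : Set E, IsOpen U → ∃ V : Set F, IsOpen V ∧ f '' (U ∩ X) = V ∩ Y)
    (hfib : ∀ y ∈ Y, ∃ x₁ ∈ X, ∃ x₂ ∈ X, x₁ ≠ x₂ ∧ f x₁ = y ∧ f x₂ = y)
    (B : Set F) (hBne : B.Nonempty) (hBc : IsCompact B) (hBv : Convex ℝ B)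
    (hBY : B ⊆ Y)
    (A : Set E) (hA : A = f ⁻¹' B ∩ X)
    (x : E) (hxA : x ∈ A) (φ : E →L[ℝ] ℝ)
    (hexp : ∀ z ∈ A, z ≠ x → φ x < φ z) :
    ∃ U : Set E, IsOpen U ∧ x ∈ U ∧ f '' (A \ U) = B ∧
      closure (convexHull ℝ (A \ U)) ≠ A ∧
      f '' closure (convexHull ℝ (A \ U)) = B := by
  have hAX : A ⊆ X := by rw [hA]; exact Set.inter_subset_right
  have hAB : ∀ z ∈ A, f z ∈ B := by
    intro z hz; rw [hA] at hz; exact hz.1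
  have hAconv : Convex ℝ A := by
    intro a ha b hb s t hs ht hst
    rw [hA]
    have hax := hAX ha
    have hbx := hAX hb
    have hmem : s • a + t • b ∈ X := hXv hax hbx hs ht hst
    have ht' : t = 1 - s := by linarith
    refine ⟨?_, hmem⟩
    show f (s • a + t • b) ∈ B
    rw [ht', haff a hax b hbx s ⟨hs, by linarith⟩]
    exact hBv (hAB a ha) (hAB b hb) hs (by linarith) (by ring)
  have hAclosed : IsClosed A := by
    have := hcont.preimage_isClosed_of_isClosed hX.isClosed hBc.isClosed
    rwa [hA, Set.inter_comm]
  -- choose second fiber point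
  have hz : ∀ b : B, ∃ z, z ∈ A ∧ f z = (b : F) ∧ φ x < φ z := by
    rintro ⟨b, hb⟩
    obtain ⟨x₁, h₁, x₂, h₂, hne, hf₁, hf₂⟩ := hfib b (hBY hb)
    have m₁ : x₁ ∈ A := by rw [hA]; exact ⟨by simp [hf₁, hb], h₁⟩
    have m₂ : x₂ ∈ A := by rw [hA]; exact ⟨by simp [hf₂, hb], h₂⟩
    by_cases h : x₁ = x
    · exact ⟨x₂, m₂, hf₂, hexp x₂ m₂ (fun e => hne (h.trans e.symm))⟩
    · exact ⟨x₁, m₁, hf₁, hexp x₁ m₁ h⟩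
  choose z hzA hzf hzφ using hz
  set O : B → Set E := fun b => φ ⁻¹' Set.Ioi ((φ x + φ (z b)) / 2) with hO
  have hOopen : ∀ b, IsOpen (O b) := fun b => isOpen_Ioi.preimage φ.continuous
  have hV : ∀ b : B, ∃ V : Set F, IsOpen V ∧ f '' (O b ∩ X) = V ∩ Y :=
    fun b => hopen (O b) (hOopen b)
  choose V hVopen hVeq using hV
  have hcover : B ⊆ ⋃ b : B, V b := by
    intro b hb
    refine Set.mem_iUnion.2 ⟨⟨b, hb⟩, ?_⟩
    have : (b : F) ∈ V ⟨b, hb⟩ ∩ Y := by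
      rw [← hVeq]
      exact ⟨z ⟨b, hb⟩, ⟨by simp [hO]; linarith [hzφ ⟨b, hb⟩], hAX (hzA ⟨b, hb⟩)⟩,
        hzf ⟨b, hb⟩⟩
    exact this.1
  obtain ⟨s, hs⟩ := hBc.elim_finite_subcover V hVopen hcover
  obtain ⟨b₀, hb₀⟩ := hBne
  have hsne : s.Nonempty := by
    obtain ⟨i, hi, _⟩ := Set.mem_iUnion₂.1 (hs hb₀)
    exact ⟨i, hi⟩
  set c : ℝ := s.inf' hsne (fun b => (φ x + φ (z b)) / 2) with hc
  have hcx : φ x < c := by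
    rw [hc]
    rw [Finset.lt_inf'_iff]
    intro b _
    linarith [hzφ b]
  refine ⟨φ ⁻¹' Set.Iio c, isOpen_Iio.preimage φ.continuous, hcx, ?_, ?_, ?_⟩
  · -- f '' (A \ U) = B
    apply Set.Subset.antisymm
    · rintro y ⟨w, hw, rfl⟩; exact hAB w hw.1
    · intro b hb
      obtain ⟨i, hi, hbV⟩ := Set.mem_iUnion₂.1 (hs hb)
      have : b ∈ f '' (O i ∩ X) := by rw [hVeq]; exact ⟨hbV, hBY hb⟩
      obtain ⟨w, ⟨hwO, hwX⟩, hwf⟩ := this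
      have hwA : w ∈ A := by rw [hA]; exact ⟨by simp [hwf, hb], hwX⟩
      have hwc : c ≤ φ w := by
        have h1 : c ≤ (φ x + φ (z i)) / 2 := Finset.inf'_le _ hi
        have h2 : (φ x + φ (z i)) / 2 < φ w := hwO
        linarith
      exact ⟨w, ⟨hwA, by simp [not_lt.2 hwc]⟩, hwf⟩
  · -- ≠ A
    intro heq
    have hsub : closure (convexHull ℝ (A \ φ ⁻¹' Set.Iio c)) ⊆ {w | c ≤ φ w} := by
      apply closure_minimal
      · apply convexHull_min
        · rintro w ⟨_, hw⟩
          exact not_lt.1 (by simpa using hw)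
        · exact convex_halfSpace_ge (IsLinearMap.mk φ.map_add φ.map_smul) c
      · exact isClosed_le continuous_const φ.continuous
    have := hsub (heq ▸ hxA)
    exact absurd this (by simp [not_le]; exact hcx)
  · -- f image = B
    have hsubA : closure (convexHull ℝ (A \ φ ⁻¹' Set.Iio c)) ⊆ A :=
      closure_minimal (convexHull_min Set.diff_subset hAconv) hAclosed
    apply Set.Subset.antisymm
    · rintro y ⟨w, hw, rfl⟩; exact hAB w (hsubA hw)
    · intro b hb
      obtain ⟨i, hi, hbV⟩ := Set.mem_iUnion₂.1 (hs hb)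
      have : b ∈ f '' (O i ∩ X) := by rw [hVeq]; exact ⟨hbV, hBY hb⟩
      obtain ⟨w, ⟨hwO, hwX⟩, hwf⟩ := this
      have hwA : w ∈ A := by rw [hA]; exact ⟨by simp [hwf, hb], hwX⟩
      have hwc : c ≤ φ w := by
        have h1 : c ≤ (φ x + φ (z i)) / 2 := Finset.inf'_le _ hi
        have h2 : (φ x + φ (z i)) / 2 < φ w := hwO
        linarith
      exact ⟨w, subset_closure (subset_convexHull ℝ _ ⟨hwA, by simp [not_lt.2 hwc]⟩), hwf⟩
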